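/- arXiv:1406.1724 — 4 statements merged into one kernel-verified Lean document; each statement's English description precedes it below -/
import Mathlib

section
/- The variance of a Rician-distributed random variable tends to 0 as the K-factor tends to infinity. Specifically, if σ² = 2γ̄/(K+1) + K/(K+1) - (π γ̄)/(2(K+1)) · L_{1/2}²(-K/(2γ̄)), where L_{1/2} is the Laguerre function of order 1/2, then σ² → 0 as K → ∞. -/
open Filter Real

/-- The variance of a Rician-distributed envelope tends to 0 as the K-factor tends to infinity.
`L` is the Laguerre function of order 1/2, assumed to satisfy the asymptotic
`L_{1/2}(x) → |x|^{1/2} / Γ(1/2 + 1)` as `x → -∞` (in the sense of asymptotic equivalence). -/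
theorem rician_variance_tendsto_zero
    (γbar : ℝ) (hγ : 0 < γbar) (L : ℝ → ℝ)
    (hL : Tendsto (fun x => L x / (|x| ^ ((1 : ℝ) / 2) / Real.Gamma ((1 : ℝ) / 2 + 1)))
      atBot (nhds 1)) :
    Tendsto (fun K : ℝ =>
        2 * γbar / (K + 1) + K / (K + 1)
          - (π * γbar) / (2 * (K + 1)) * (L (-K / (2 * γbar))) ^ 2)
      atTop (nhds 0) := by
  have hΓ : Real.Gamma ((1:ℝ)/2 + 1) = Real.sqrt π / 2 := by
    rw [Real.Gamma_add_one (by norm_num), Real.Gamma_one_half_eq]; ring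
  obtain ⟨g, hgdef⟩ : ∃ g : ℝ → ℝ, g = fun K =>
      L (-K/(2*γbar)) / (|(-K/(2*γbar))| ^ ((1:ℝ)/2) / Real.Gamma ((1:ℝ)/2 + 1)) := ⟨_, rfl⟩
  have hx : Tendsto (fun K : ℝ => -K/(2*γbar)) atTop atBot := by
    apply Tendsto.atBot_div_const (by positivity)
    exact tendsto_neg_atTop_atBot
  have hg : Tendsto g atTop (nhds 1) := by rw [hgdef]; exact hL.comp hx
  have hsq : Tendsto (fun K => 1 - g K ^ 2) atTop (nhds 0) := by
    have := (tendsto_const_nhds (x := (1:ℝ))).sub (hg.pow 2)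
    simpa using this
  have hinv : Tendsto (fun K : ℝ => (K + 1)⁻¹) atTop (nhds 0) :=
    tendsto_inv_atTop_zero.comp (tendsto_atTop_add_const_right _ 1 tendsto_id)
  have hfrac : Tendsto (fun K : ℝ => K / (K + 1)) atTop (nhds 1) := by
    have heq : (fun K : ℝ => K / (K + 1)) =ᶠ[atTop] fun K => 1 - (K+1)⁻¹ := by
      filter_upwards [eventually_gt_atTop 0] with K hK
      field_simp
      ring
    rw [tendsto_congr' heq]
    simpa using (tendsto_const_nhds (x := (1:ℝ))).sub hinv
  have hmain : Tendsto (fun K : ℝ =>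
      2 * γbar * (K + 1)⁻¹ + (K / (K + 1)) * (1 - g K ^ 2)) atTop (nhds 0) := by
    have := ((hinv.const_mul (2 * γbar)).add (hfrac.mul hsq))
    simpa using this
  refine hmain.congr' ?_
  filter_upwards [eventually_gt_atTop 0] with K hK
  have hpos : 0 < K / (2 * γbar) := by positivity
  have hv : |(-K/(2*γbar))| = K/(2*γbar) := by
    rw [abs_div, abs_neg, abs_of_pos hK, abs_of_pos (by positivity : (0:ℝ) < 2*γbar)]
  have hpow : |(-K/(2*γbar))| ^ ((1:ℝ)/2) = Real.sqrt (K/(2*γbar)) := by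
    rw [hv, ← Real.sqrt_eq_rpow]
  have hd : |(-K/(2*γbar))| ^ ((1:ℝ)/2) / Real.Gamma ((1:ℝ)/2+1) ≠ 0 := by
    rw [hpow, hΓ]
    have : 0 < Real.sqrt (K/(2*γbar)) := Real.sqrt_pos.mpr hpos
    have : 0 < Real.sqrt π := Real.sqrt_pos.mpr Real.pi_pos
    positivity
  have hLv : L (-K/(2*γbar)) =
      g K * (|(-K/(2*γbar))| ^ ((1:ℝ)/2) / Real.Gamma ((1:ℝ)/2+1)) := by
    rw [hgdef]; exact (div_mul_cancel₀ _ hd).symm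
  have hK1 : K + 1 ≠ 0 := by positivity
  have hπ : π ≠ 0 := Real.pi_ne_zero
  have hg2 : (L (-K/(2*γbar)))^2 = g K ^ 2 * (K/(2*γbar) * 4 / π) := by
    rw [hLv, hpow, hΓ, mul_pow, div_pow, div_pow, Real.sq_sqrt hpos.le,
      Real.sq_sqrt Real.pi_pos.le]
    rw [div_div_eq_mul_div, mul_div_assoc, mul_div_assoc]
    norm_num
  rw [show (-K / (2 * γbar)) = (-K/(2*γbar)) by ring] at hg2 ⊢
  rw [hg2]
  field_simp
  ring
end

section
/- If X and Y are independent random variables where X is exponentially distributed with mean γ̄_s and Y has the noncentral chi-square-type density f_Y(y) = ((1+K)/γ̄) e^{-K-(1+K)y/γ̄} I_0(2√(K(1+K)y/γ̄)), then the density of Z = X/Y is f_Z(z) = ((1+K)γ̄/γ̄_s) e^{-K + K(1+K)/((1+K)+ (γ̄/γ̄_s)z)} · ((1+K)² + z γ̄/γ̄_s) / ((1+K) + z γ̄/γ̄_s)³. -/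
open MeasureTheory Real ProbabilityTheory

noncomputable def besselI0 (x : ℝ) : ℝ := ∑' n : ℕ, (x / 2) ^ (2 * n) / ((n.factorial : ℝ)) ^ 2

lemma besselI0_summable (x : ℝ) :
    Summable (fun n : ℕ => (x / 2) ^ (2 * n) / ((n.factorial : ℝ)) ^ 2) := by
  refine Summable.of_nonneg_of_le (fun n => by rw [pow_mul]; positivity) (fun n => ?_)
    (Real.summable_pow_div_factorial ((x/2)^2))
  rw [pow_mul]
  have h1 : (1:ℝ) ≤ (n.factorial : ℝ) := by
    exact_mod_cast Nat.one_le_iff_ne_zero.2 (Nat.factorial_ne_zero n)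
  apply div_le_div_of_nonneg_left (by positivity) (by positivity)
  nlinarith

lemma measurable_besselI0 : Measurable besselI0 := by
  have h : ∀ x : ℝ, Filter.Tendsto
      (fun N : ℕ => ∑ n ∈ Finset.range N, (x / 2) ^ (2 * n) / ((n.factorial : ℝ)) ^ 2)
      Filter.atTop (nhds (besselI0 x)) :=
    fun x => ((besselI0_summable x).hasSum).tendsto_sum_nat
  exact measurable_of_tendsto_metrizable
    (fun N => by fun_prop) (tendsto_pi_nhds.2 h)

lemma besselI0_nonneg (x : ℝ) : 0 ≤ besselI0 x :=
  tsum_nonneg (fun n => by rw [pow_mul]; positivity)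

lemma besselI0_sqrt {b : ℝ} (hb : 0 ≤ b) :
    besselI0 (2 * Real.sqrt b) = ∑' n : ℕ, b ^ n / ((n.factorial : ℝ)) ^ 2 := by
  unfold besselI0
  congr 1
  funext n
  have h : 2 * Real.sqrt b / 2 = Real.sqrt b := by ring
  rw [h, pow_mul, Real.sq_sqrt hb]

lemma gamma_term (n : ℕ) {l : ℝ} (hl : 0 < l) :
    ∫⁻ y in Set.Ioi (0:ℝ), ENNReal.ofReal (y ^ n * Real.exp (-(l * y))) =
    ENNReal.ofReal ((n.factorial : ℝ) / l ^ (n + 1)) := by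
  have hint : IntegrableOn (fun y : ℝ => y ^ n * Real.exp (-(l * y))) (Set.Ioi 0) := by
    have := integrableOn_rpow_mul_exp_neg_mul_rpow (p := 1) (s := n) (b := l)
      (lt_of_lt_of_le (by norm_num) (Nat.cast_nonneg n)) zero_lt_one hl
    refine this.congr_fun (fun x hx => ?_) measurableSet_Ioi
    beta_reduce
    rw [Real.rpow_one, Real.rpow_natCast, neg_mul]
  rw [← ofReal_integral_eq_lintegral_ofReal hint]
  · congr 1
    have h2 : ∫ y in Set.Ioi (0:ℝ), y ^ n * Real.exp (-(l * y))
        = ∫ y in Set.Ioi (0:ℝ), y ^ ((n + 1 : ℝ) - 1) * Real.exp (-(l * y)) := by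
      refine setIntegral_congr_fun measurableSet_Ioi (fun x hx => ?_)
      rw [add_sub_cancel_right, Real.rpow_natCast]
    rw [h2, Real.integral_rpow_mul_exp_neg_mul_Ioi (by positivity) hl]
    rw [show ((n:ℝ) + 1) = ((n + 1 : ℕ) : ℝ) by push_cast; ring, Real.rpow_natCast]
    rw [show ((n+1:ℕ):ℝ) = (n:ℝ)+1 by push_cast; ring, Real.Gamma_nat_eq_factorial]
    rw [one_div, inv_pow, div_eq_mul_inv, mul_comm]
  · refine (ae_restrict_iff' measurableSet_Ioi).2 (Filter.Eventually.of_forall fun x hx => ?_)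
    have : (0:ℝ) < x := hx
    positivity

lemma laplace_rician (γbar K : ℝ) (hγbar : 0 < γbar) (hK : 0 ≤ K) {s : ℝ} (hs : 0 ≤ s) :
    ∫⁻ y in Set.Ioi (0:ℝ), ENNReal.ofReal
      (Real.exp (-(s * y)) * (((1 + K) / γbar) * Real.exp (-K - (1 + K) * y / γbar)
        * besselI0 (2 * Real.sqrt (K * (1 + K) * y / γbar)))) =
    ENNReal.ofReal ((1 + K) / (γbar * (s + (1 + K) / γbar))
      * Real.exp (-K + K * (1 + K) / (γbar * (s + (1 + K) / γbar)))) := by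
  have hK1 : (0:ℝ) < 1 + K := by linarith
  set l : ℝ := s + (1 + K) / γbar with hl_def
  have hl : 0 < l := by positivity
  set β : ℝ := K * (1 + K) / γbar with hβ_def
  have hβ : 0 ≤ β := by positivity
  set C : ℕ → ℝ := fun n => ((1 + K) / γbar) * Real.exp (-K) * (β ^ n / ((n.factorial : ℝ))^2)
    with hC_def
  have hCnn : ∀ n, 0 ≤ C n := fun n => by positivity
  -- pointwise identity on Ioi 0
  have hpt : ∀ y ∈ Set.Ioi (0:ℝ),
      ENNReal.ofReal (Real.exp (-(s * y)) * (((1 + K) / γbar) * Real.exp (-K - (1 + K) * y / γbar)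
        * besselI0 (2 * Real.sqrt (K * (1 + K) * y / γbar)))) =
      ∑' n : ℕ, ENNReal.ofReal (C n * (y ^ n * Real.exp (-(l * y)))) := by
    intro y hy
    have hy0 : 0 ≤ y := le_of_lt hy
    have harg : K * (1 + K) * y / γbar = β * y := by rw [hβ_def]; ring
    have hargnn : 0 ≤ β * y := mul_nonneg hβ hy0
    rw [harg, besselI0_sqrt hargnn]
    have hsum1 : Summable (fun n : ℕ => (β * y) ^ n / ((n.factorial : ℝ))^2) := by
      refine Summable.of_nonneg_of_le (fun n => by positivity) (fun n => ?_)
        (Real.summable_pow_div_factorial (β * y))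
      have h1 : (1:ℝ) ≤ (n.factorial : ℝ) := by
        exact_mod_cast Nat.one_le_iff_ne_zero.2 (Nat.factorial_ne_zero n)
      apply div_le_div_of_nonneg_left (by positivity) (by positivity)
      nlinarith
    have key : Real.exp (-(s * y)) * (((1 + K) / γbar) * Real.exp (-K - (1 + K) * y / γbar)
        * ∑' n : ℕ, (β * y) ^ n / ((n.factorial : ℝ))^2)
        = ∑' n : ℕ, C n * (y ^ n * Real.exp (-(l * y))) := by
      rw [← tsum_mul_left, ← tsum_mul_left]
      refine tsum_congr (fun n => ?_)
      rw [hC_def]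
      have hexp : Real.exp (-(s * y)) * Real.exp (-K - (1 + K) * y / γbar)
          = Real.exp (-K) * Real.exp (-(l * y)) := by
        rw [← Real.exp_add, ← Real.exp_add]
        congr 1
        rw [hl_def]
        field_simp
        ring
      have hpow : (β * y) ^ n = β ^ n * y ^ n := mul_pow _ _ _
      calc Real.exp (-(s * y)) * (((1 + K) / γbar) * Real.exp (-K - (1 + K) * y / γbar)
            * ((β * y) ^ n / ((n.factorial : ℝ))^2))
          = (Real.exp (-(s * y)) * Real.exp (-K - (1 + K) * y / γbar))
            * (((1 + K) / γbar) * ((β * y) ^ n / ((n.factorial : ℝ))^2)) := by ring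
        _ = (Real.exp (-K) * Real.exp (-(l * y)))
            * (((1 + K) / γbar) * ((β ^ n * y ^ n) / ((n.factorial : ℝ))^2)) := by
            rw [hexp, hpow]
        _ = ((1 + K) / γbar) * Real.exp (-K) * (β ^ n / ((n.factorial : ℝ))^2)
            * (y ^ n * Real.exp (-(l * y))) := by ring
    rw [key]
    refine ENNReal.ofReal_tsum_of_nonneg (fun n => by positivity) ?_
    have : Summable (fun n : ℕ => (β * y) ^ n / ((n.factorial : ℝ))^2) := hsum1
    have h2 : Summable (fun n : ℕ =>
        (((1 + K) / γbar) * Real.exp (-K) * Real.exp (-(l * y))) * ((β * y) ^ n / ((n.factorial : ℝ))^2)) :=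
      this.mul_left _
    refine h2.congr (fun n => ?_)
    rw [hC_def, mul_pow]
    ring
  rw [setLIntegral_congr_fun_ae measurableSet_Ioi (Filter.Eventually.of_forall hpt)]
  rw [lintegral_tsum (fun n => by fun_prop)]
  have hterm : ∀ n : ℕ, ∫⁻ y in Set.Ioi (0:ℝ), ENNReal.ofReal (C n * (y ^ n * Real.exp (-(l * y))))
      = ENNReal.ofReal (C n * ((n.factorial : ℝ) / l ^ (n + 1))) := by
    intro n
    calc ∫⁻ y in Set.Ioi (0:ℝ), ENNReal.ofReal (C n * (y ^ n * Real.exp (-(l * y))))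
        = ∫⁻ y in Set.Ioi (0:ℝ), ENNReal.ofReal (C n) * ENNReal.ofReal (y ^ n * Real.exp (-(l * y))) := by
          refine setLIntegral_congr_fun_ae measurableSet_Ioi (Filter.Eventually.of_forall fun y hy => ?_)
          rw [← ENNReal.ofReal_mul (hCnn n)]
      _ = ENNReal.ofReal (C n) * ∫⁻ y in Set.Ioi (0:ℝ), ENNReal.ofReal (y ^ n * Real.exp (-(l * y))) :=
          lintegral_const_mul _ (by fun_prop)
      _ = ENNReal.ofReal (C n) * ENNReal.ofReal ((n.factorial : ℝ) / l ^ (n + 1)) := by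
          rw [gamma_term n hl]
      _ = ENNReal.ofReal (C n * ((n.factorial : ℝ) / l ^ (n + 1))) := by
          rw [← ENNReal.ofReal_mul (hCnn n)]
  simp_rw [hterm]
  have hfinal : Summable (fun n : ℕ => C n * ((n.factorial : ℝ) / l ^ (n + 1))) ∧
      (∑' n : ℕ, C n * ((n.factorial : ℝ) / l ^ (n + 1)))
        = (1 + K) / (γbar * l) * Real.exp (-K + K * (1 + K) / (γbar * l)) := by
    have hsimp : ∀ n : ℕ, C n * ((n.factorial : ℝ) / l ^ (n + 1))
        = (((1 + K) / (γbar * l)) * Real.exp (-K)) * ((β / l) ^ n / (n.factorial : ℝ)) := by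
      intro n
      rw [hC_def]
      have hfne : ((n.factorial : ℝ)) ≠ 0 := by
        exact_mod_cast Nat.factorial_ne_zero n
      field_simp
      rw [div_pow β l n, pow_succ, mul_comm (l ^ n) l, mul_assoc, mul_div_cancel₀ _ (pow_ne_zero n hl.ne'), mul_comm]
    constructor
    · exact Summable.congr ((Real.summable_pow_div_factorial (β / l)).mul_left _)
        (fun n => (hsimp n).symm)
    · calc (∑' n : ℕ, C n * ((n.factorial : ℝ) / l ^ (n + 1)))
          = ∑' n : ℕ, (((1 + K) / (γbar * l)) * Real.exp (-K)) * ((β / l) ^ n / (n.factorial : ℝ)) := by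
            exact tsum_congr hsimp
        _ = (((1 + K) / (γbar * l)) * Real.exp (-K)) * ∑' n : ℕ, ((β / l) ^ n / (n.factorial : ℝ)) :=
            tsum_mul_left
        _ = (((1 + K) / (γbar * l)) * Real.exp (-K)) * Real.exp (β / l) := by
            rw [Real.exp_eq_exp_ℝ, NormedSpace.exp_eq_tsum_div]
        _ = (1 + K) / (γbar * l) * Real.exp (-K + K * (1 + K) / (γbar * l)) := by
            rw [Real.exp_add]
            have : β / l = K * (1 + K) / (γbar * l) := by
              rw [hβ_def]
              field_simp
            rw [this]
            ring
  rw [← ENNReal.ofReal_tsum_of_nonneg (fun n => by positivity) hfinal.1, hfinal.2]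

lemma hasDeriv_G (c K : ℝ) (hc : 0 < c) (hK : 0 ≤ K) {z : ℝ} (hz : 0 ≤ z) :
    HasDerivAt (fun z => 1 - ((1 + K) / ((1 + K) + c * z))
        * Real.exp (-K + K * (1 + K) / ((1 + K) + c * z)))
      (c * (1 + K) * Real.exp (-K + K * (1 + K) / ((1 + K) + c * z))
        * (((1 + K) ^ 2 + c * z) / ((1 + K) + c * z) ^ 3)) z := by
  have hK1 : (0:ℝ) < 1 + K := by linarith
  have hu : (0:ℝ) < (1 + K) + c * z := by positivity
  have h1 : HasDerivAt (fun z : ℝ => (1 + K) + c * z) c z := by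
    simpa using ((hasDerivAt_id z).const_mul c).const_add (1 + K)
  have h2 : HasDerivAt (fun z : ℝ => ((1 + K) + c * z)⁻¹)
      (-c / ((1 + K) + c * z) ^ 2) z := h1.inv hu.ne'
  have h3 : HasDerivAt (fun z : ℝ => -K + K * (1 + K) * ((1 + K) + c * z)⁻¹)
      (K * (1 + K) * (-c / ((1 + K) + c * z) ^ 2)) z :=
    (h2.const_mul (K * (1 + K))).const_add (-K)
  have h4 := h3.exp
  have h5 := ((h2.const_mul (1 + K)).mul h4).const_sub 1
  have heq : (fun z : ℝ => 1 - ((1 + K) / ((1 + K) + c * z))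
      * Real.exp (-K + K * (1 + K) / ((1 + K) + c * z)))
      = (fun z : ℝ => 1 - ((1 + K) * ((1 + K) + c * z)⁻¹)
        * Real.exp (-K + K * (1 + K) * ((1 + K) + c * z)⁻¹)) := by
    funext w
    rw [div_eq_mul_inv, div_eq_mul_inv]
  rw [heq, show (-K + K * (1 + K) / ((1 + K) + c * z))
      = (-K + K * (1 + K) * ((1 + K) + c * z)⁻¹) by rw [div_eq_mul_inv]]
  refine h5.congr_deriv ?_
  field_simp
  ring

lemma rhs_Iic (c K : ℝ) (hc : 0 < c) (hK : 0 ≤ K) {a : ℝ} (ha : 0 ≤ a) :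
    ∫⁻ z in Set.Iic a, ENNReal.ofReal
      (Set.indicator (Set.Ici (0:ℝ))
        (fun z => c * (1 + K) * Real.exp (-K + K * (1 + K) / ((1 + K) + c * z))
          * (((1 + K) ^ 2 + c * z) / ((1 + K) + c * z) ^ 3)) z)
    = ENNReal.ofReal (1 - ((1 + K) / ((1 + K) + c * a))
        * Real.exp (-K + K * (1 + K) / ((1 + K) + c * a))) := by
  have hK1 : (0:ℝ) < 1 + K := by linarith
  set h : ℝ → ℝ := fun z => c * (1 + K) * Real.exp (-K + K * (1 + K) / ((1 + K) + c * z))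
    * (((1 + K) ^ 2 + c * z) / ((1 + K) + c * z) ^ 3) with hh_def
  set G : ℝ → ℝ := fun z => 1 - ((1 + K) / ((1 + K) + c * z))
    * Real.exp (-K + K * (1 + K) / ((1 + K) + c * z)) with hG_def
  have hne : ∀ z ∈ Set.Icc (0:ℝ) a, ((1 + K) + c * z) ≠ 0 := by
    intro z hz
    have := hz.1
    positivity
  have hcont : ContinuousOn h (Set.Icc 0 a) := by
    rw [hh_def]
    apply ContinuousOn.mul
    · apply ContinuousOn.mul continuousOn_const
      exact Real.continuous_exp.comp_continuousOn
        (ContinuousOn.add continuousOn_const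
          (ContinuousOn.div continuousOn_const (by fun_prop) hne))
    · exact ContinuousOn.div (by fun_prop) (by fun_prop)
        (fun z hz => pow_ne_zero _ (hne z hz))
  have hint : IntegrableOn h (Set.Icc 0 a) := hcont.integrableOn_compact isCompact_Icc
  have hpos : ∀ z ∈ Set.Icc (0:ℝ) a, 0 ≤ h z := by
    intro z hz
    have hz0 := hz.1
    rw [hh_def]
    positivity
  have hG0 : G 0 = 0 := by
    simp only [hG_def, mul_zero, add_zero, mul_div_assoc, div_self hK1.ne', mul_one,
      neg_add_cancel, Real.exp_zero, one_mul, sub_self]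
  have hftc : ∫ z in (0:ℝ)..a, h z = G a - G 0 := by
    apply intervalIntegral.integral_eq_sub_of_hasDerivAt
    · intro z hz
      rw [Set.uIcc_of_le ha] at hz
      exact hasDeriv_G c K hc hK hz.1
    · rw [intervalIntegrable_iff_integrableOn_Ioc_of_le ha]
      exact hint.mono_set Set.Ioc_subset_Icc_self
  have hzero : ∫⁻ z in Set.Iio (0:ℝ), ENNReal.ofReal ((Set.Ici (0:ℝ)).indicator h z) = 0 := by
    refine (setLIntegral_congr_fun_ae (g := fun _ => (0:ENNReal)) measurableSet_Iio
      (Filter.Eventually.of_forall fun z (hz : z < 0) => ?_)).trans lintegral_zero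
    rw [Set.indicator_of_notMem (by simpa using hz), ENNReal.ofReal_zero]
  calc ∫⁻ z in Set.Iic a, ENNReal.ofReal (Set.indicator (Set.Ici (0:ℝ)) h z)
      = (∫⁻ z in Set.Iio 0, ENNReal.ofReal (Set.indicator (Set.Ici (0:ℝ)) h z))
        + ∫⁻ z in Set.Icc 0 a, ENNReal.ofReal (Set.indicator (Set.Ici (0:ℝ)) h z) :=
        lintegral_Iic_eq_lintegral_Iio_add_Icc _ ha
    _ = ∫⁻ z in Set.Icc 0 a, ENNReal.ofReal (h z) := by
        rw [hzero, zero_add]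
        refine setLIntegral_congr_fun_ae measurableSet_Icc
          (Filter.Eventually.of_forall fun z hz => ?_)
        rw [Set.indicator_of_mem (Set.mem_Ici.2 hz.1)]
    _ = ENNReal.ofReal (∫ z in Set.Icc (0:ℝ) a, h z) := by
        rw [ofReal_integral_eq_lintegral_ofReal hint
          ((ae_restrict_iff' measurableSet_Icc).2 (Filter.Eventually.of_forall hpos))]
    _ = ENNReal.ofReal (G a) := by
        rw [integral_Icc_eq_integral_Ioc, ← intervalIntegral.integral_of_le ha, hftc, hG0,
          sub_zero]
    _ = ENNReal.ofReal (1 - ((1 + K) / ((1 + K) + c * a))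
        * Real.exp (-K + K * (1 + K) / ((1 + K) + c * a))) := by rw [hG_def]

/-- If `X` is exponential with mean `γ̄s` and `Y` has the Rician-power density
`f_Y(y) = ((1+K)/γ̄) e^{-K-(1+K)y/γ̄} I₀(2√(K(1+K)y/γ̄))`, with `X, Y` independent, then
`Z = X/Y` has density
`f_Z(z) = ((1+K)γ̄/γ̄s) e^{-K + K(1+K)/((1+K)+(γ̄/γ̄s)z)}
  ((1+K)² + zγ̄/γ̄s)/((1+K)+zγ̄/γ̄s)³` on `z ≥ 0`. -/
theorem ratio_rayleigh_rician_density
    {Ω : Type*} [MeasureSpace Ω] (P : Measure Ω) [IsProbabilityMeasure P]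
    (γs γbar K : ℝ) (hγs : 0 < γs) (hγbar : 0 < γbar) (hK : 0 ≤ K)
    (X Y : Ω → ℝ) (hX : Measurable X) (hY : Measurable Y)
    (hindep : IndepFun X Y P)
    (hmapX : Measure.map X P = volume.withDensity
      (fun x => ENNReal.ofReal
        (Set.indicator (Set.Ici (0 : ℝ)) (fun x => (1 / γs) * Real.exp (-x / γs)) x)))
    (hmapY : Measure.map Y P = volume.withDensity
      (fun y => ENNReal.ofReal
        (Set.indicator (Set.Ici (0 : ℝ))
          (fun y => ((1 + K) / γbar) * Real.exp (-K - (1 + K) * y / γbar)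
            * besselI0 (2 * Real.sqrt (K * (1 + K) * y / γbar))) y))) :
    Measure.map (fun ω => X ω / Y ω) P = volume.withDensity
      (fun z => ENNReal.ofReal
        (Set.indicator (Set.Ici (0 : ℝ))
          (fun z => ((1 + K) * γbar / γs)
            * Real.exp (-K + K * (1 + K) / ((1 + K) + (γbar / γs) * z))
            * (((1 + K) ^ 2 + z * γbar / γs) / ((1 + K) + z * γbar / γs) ^ 3)) z)) := by
  have hK1 : (0:ℝ) < 1 + K := by linarith
  have hc : (0:ℝ) < γbar / γs := by positivity
  -- density of Y as a real function
  set g0 : ℝ → ℝ := fun y => ((1 + K) / γbar) * Real.exp (-K - (1 + K) * y / γbar)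
      * besselI0 (2 * Real.sqrt (K * (1 + K) * y / γbar)) with hg0_def
  have hg0m : Measurable g0 := by
    apply Measurable.mul
    · fun_prop
    · exact measurable_besselI0.comp (by fun_prop)
  have hg0nn : ∀ y, 0 ≤ y → 0 ≤ g0 y := by
    intro y hy
    have h1 : 0 ≤ besselI0 (2 * Real.sqrt (K * (1 + K) * y / γbar)) := besselI0_nonneg _
    have h2 : (0:ℝ) ≤ (1 + K) / γbar := by positivity
    have := Real.exp_nonneg (-K - (1 + K) * y / γbar)
    positivity
  set gY : ℝ → ENNReal := fun y => ENNReal.ofReal (Set.indicator (Set.Ici (0:ℝ)) g0 y)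
    with hgY_def
  have hgYm : Measurable gY := by
    apply Measurable.ennreal_ofReal
    exact hg0m.indicator measurableSet_Ici
  -- the X density is the exponential pdf
  have hfX_eq : (fun x => ENNReal.ofReal
      (Set.indicator (Set.Ici (0 : ℝ)) (fun x => (1 / γs) * Real.exp (-x / γs)) x))
      = ProbabilityTheory.exponentialPDF (1 / γs) := by
    funext x
    rw [ProbabilityTheory.exponentialPDF_eq, Set.indicator_apply]
    by_cases hx : x ∈ Set.Ici (0:ℝ)
    · rw [if_pos hx, if_pos (Set.mem_Ici.1 hx)]
      congr 2
      field_simp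
    · rw [if_neg hx, if_neg (fun h => hx (Set.mem_Ici.2 h)), ENNReal.ofReal_zero]
  have hcdfX : ∀ t : ℝ, (Measure.map X P) (Set.Iic t)
      = ENNReal.ofReal (if 0 ≤ t then 1 - Real.exp (-(1 / γs * t)) else 0) := by
    intro t
    rw [hmapX, withDensity_apply _ measurableSet_Iic, hfX_eq,
      ProbabilityTheory.lintegral_exponentialPDF_eq_antiDeriv (by positivity) t]
  -- Y is a.s. positive
  have hYIic0 : (Measure.map Y P) (Set.Iic (0:ℝ)) = 0 := by
    rw [hmapY, withDensity_apply _ measurableSet_Iic,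
      setLIntegral_congr (Iio_ae_eq_Iic (a := (0:ℝ))).symm]
    refine (setLIntegral_congr_fun_ae (g := fun _ => (0:ENNReal)) measurableSet_Iio
      (Filter.Eventually.of_forall fun z (hz : z < 0) => ?_)).trans lintegral_zero
    simp only [hgY_def]
    rw [Set.indicator_of_notMem (by simpa using hz), ENNReal.ofReal_zero]
  have hYpos : ∀ᵐ ω ∂P, 0 < Y ω := by
    have : P (Y ⁻¹' Set.Iic 0) = 0 := by
      rw [← Measure.map_apply hY measurableSet_Iic, hYIic0]
    filter_upwards [measure_eq_zero_iff_ae_notMem.1 this] with ω h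
    simpa using h
  -- X is a.s. nonnegative
  have hXnn : ∀ᵐ ω ∂P, 0 ≤ X ω := by
    have h0 : (Measure.map X P) (Set.Iio (0:ℝ)) = 0 := by
      rw [hmapX, withDensity_apply _ measurableSet_Iio]
      refine (setLIntegral_congr_fun_ae (g := fun _ => (0:ENNReal)) measurableSet_Iio
        (Filter.Eventually.of_forall fun z (hz : z < 0) => ?_)).trans lintegral_zero
      rw [Set.indicator_of_notMem (by simpa using hz), ENNReal.ofReal_zero]
    have : P (X ⁻¹' Set.Iio 0) = 0 := by
      rw [← Measure.map_apply hX measurableSet_Iio, h0]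
    filter_upwards [measure_eq_zero_iff_ae_notMem.1 this] with ω h
    simpa using h
  -- instances and product structure
  haveI hPX : IsProbabilityMeasure (Measure.map X P) := Measure.isProbabilityMeasure_map hX.aemeasurable
  haveI hPY : IsProbabilityMeasure (Measure.map Y P) := Measure.isProbabilityMeasure_map hY.aemeasurable
  haveI hPZ : IsProbabilityMeasure (Measure.map (fun ω => X ω / Y ω) P) :=
    Measure.isProbabilityMeasure_map (hX.div hY).aemeasurable
  have hprod : Measure.map (fun ω => (X ω, Y ω)) P
      = (Measure.map X P).prod (Measure.map Y P) :=
    (ProbabilityTheory.indepFun_iff_map_prod_eq_prod_map_map hX.aemeasurable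
      hY.aemeasurable).mp hindep
  refine Measure.ext_of_Iic _ _ (fun a => ?_)
  have hmapZ : (Measure.map (fun ω => X ω / Y ω) P) (Set.Iic a)
      = P {ω | X ω / Y ω ≤ a} := by
    rw [Measure.map_apply (f := fun ω => X ω / Y ω) (hX.div hY) measurableSet_Iic]
    rfl
  by_cases ha : 0 ≤ a
  swap
  · -- a < 0 : both sides vanish
    push_neg at ha
    rw [hmapZ]
    have hL : P {ω | X ω / Y ω ≤ a} = 0 := by
      refine measure_eq_zero_iff_ae_notMem.2 ?_
      filter_upwards [hXnn, hYpos] with ω hx hy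
      intro hmem
      have : (0:ℝ) ≤ X ω / Y ω := div_nonneg hx hy.le
      have : X ω / Y ω ≤ a := hmem
      linarith
    rw [hL, withDensity_apply _ measurableSet_Iic]
    refine ((setLIntegral_congr_fun_ae (g := fun _ => (0:ENNReal)) measurableSet_Iic
      (Filter.Eventually.of_forall fun z (hz : z ≤ a) => ?_)).trans lintegral_zero).symm
    rw [Set.indicator_of_notMem (by simp only [Set.mem_Ici, not_le]; linarith),
      ENNReal.ofReal_zero]
  · -- a ≥ 0
    set T : ℝ := (1 + K) / (γbar * (a / γs + (1 + K) / γbar))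
        * Real.exp (-K + K * (1 + K) / (γbar * (a / γs + (1 + K) / γbar))) with hT_def
    have hl : (0:ℝ) < a / γs + (1 + K) / γbar := by positivity
    have hTnn : 0 ≤ T := by rw [hT_def]; positivity
    have hYae : ∀ᵐ y ∂(Measure.map Y P), 0 < y := by
      filter_upwards [measure_eq_zero_iff_ae_notMem.1 hYIic0] with y h
      simpa using h
    -- indicator-to-Ioi conversion
    have hind : ∀ ψ : ℝ → ℝ, (∫⁻ y, ENNReal.ofReal (Set.indicator (Set.Ici (0:ℝ)) ψ y))
        = ∫⁻ y in Set.Ioi (0:ℝ), ENNReal.ofReal (ψ y) := by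
      intro ψ
      have hpt : ∀ y, ENNReal.ofReal (Set.indicator (Set.Ici (0:ℝ)) ψ y)
          = Set.indicator (Set.Ici (0:ℝ)) (fun y => ENNReal.ofReal (ψ y)) y := by
        intro y
        by_cases h : y ∈ Set.Ici (0:ℝ) <;> simp [Set.indicator_apply, h]
      simp_rw [hpt]
      rw [lintegral_indicator measurableSet_Ici,
        setLIntegral_congr (Ioi_ae_eq_Ici (a := (0:ℝ))).symm]
    -- total mass of g0
    have hF1val : (∫⁻ y, ENNReal.ofReal (Set.indicator (Set.Ici (0:ℝ)) g0 y)) = 1 := by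
      rw [hind g0]
      have : ∀ y ∈ Set.Ioi (0:ℝ), ENNReal.ofReal (g0 y)
          = ENNReal.ofReal (Real.exp (-((0:ℝ) * y)) * g0 y) := by
        intro y hy
        rw [zero_mul, neg_zero, Real.exp_zero, one_mul]
      rw [setLIntegral_congr_fun_ae measurableSet_Ioi (Filter.Eventually.of_forall this),
        hg0_def, laplace_rician γbar K hγbar hK le_rfl]
      have e0 : γbar * ((0:ℝ) + (1 + K) / γbar) = 1 + K := by field_simp; ring
      rw [e0, div_self hK1.ne', one_mul, mul_div_assoc, div_self hK1.ne', mul_one,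
        neg_add_cancel, Real.exp_zero, ENNReal.ofReal_one]
    -- Laplace transform value
    have hF2val : (∫⁻ y, ENNReal.ofReal (Set.indicator (Set.Ici (0:ℝ)) g0 y
        * Real.exp (-(a / γs * y)))) = ENNReal.ofReal T := by
      have hpt : ∀ y, Set.indicator (Set.Ici (0:ℝ)) g0 y * Real.exp (-(a / γs * y))
          = Set.indicator (Set.Ici (0:ℝ))
            (fun y => Real.exp (-(a / γs * y)) * g0 y) y := by
        intro y
        by_cases h : y ∈ Set.Ici (0:ℝ)
        · rw [Set.indicator_of_mem h, Set.indicator_of_mem h, mul_comm]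
        · rw [Set.indicator_of_notMem h, Set.indicator_of_notMem h, zero_mul]
      simp_rw [hpt]
      rw [hind (fun y => Real.exp (-(a / γs * y)) * g0 y), hg0_def,
        laplace_rician γbar K hγbar hK (by positivity : (0:ℝ) ≤ a / γs), hT_def]
    -- compute the LHS
    have hLHS : (Measure.map (fun ω => X ω / Y ω) P) (Set.Iic a)
        = 1 - ENNReal.ofReal T := by
      rw [hmapZ]
      have hsetae : P {ω | X ω / Y ω ≤ a} = P {ω | X ω ≤ a * Y ω} := by
        refine measure_congr ?_
        refine Filter.eventuallyEq_set.2 ?_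
        filter_upwards [hYpos] with ω hω
        exact div_le_iff₀ hω
      have hS : MeasurableSet {p : ℝ × ℝ | p.1 ≤ a * p.2} :=
        measurableSet_le measurable_fst (measurable_snd.const_mul a)
      have hstep : P {ω | X ω ≤ a * Y ω}
          = ∫⁻ y, (Measure.map X P) (Set.Iic (a * y)) ∂(Measure.map Y P) := by
        have h1 : P {ω | X ω ≤ a * Y ω}
            = (Measure.map (fun ω => (X ω, Y ω)) P) {p : ℝ × ℝ | p.1 ≤ a * p.2} := by
          rw [Measure.map_apply (hX.prodMk hY) hS]
          rfl
        rw [h1, hprod, Measure.prod_apply_symm hS]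
        refine lintegral_congr fun y => ?_
        congr 1
      rw [hsetae, hstep]
      have hcong : ∫⁻ y, (Measure.map X P) (Set.Iic (a * y)) ∂(Measure.map Y P)
          = ∫⁻ y, ENNReal.ofReal (1 - Real.exp (-(a / γs * y))) ∂(Measure.map Y P) := by
        refine lintegral_congr_ae ?_
        filter_upwards [hYae] with y hy
        rw [hcdfX (a * y), if_pos (mul_nonneg ha hy.le),
          show 1 / γs * (a * y) = a / γs * y by ring]
      rw [hcong, hmapY, lintegral_withDensity_eq_lintegral_mul volume hgYm
        (by exact (Measurable.ennreal_ofReal (by fun_prop)))]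
      have hsplit : ∀ y, (gY * fun y => ENNReal.ofReal (1 - Real.exp (-(a / γs * y)))) y
          = ENNReal.ofReal (Set.indicator (Set.Ici (0:ℝ)) g0 y)
            - ENNReal.ofReal (Set.indicator (Set.Ici (0:ℝ)) g0 y
              * Real.exp (-(a / γs * y))) := by
        intro y
        simp only [Pi.mul_apply, hgY_def]
        have hGnn : 0 ≤ Set.indicator (Set.Ici (0:ℝ)) g0 y :=
          Set.indicator_nonneg (fun x hx => hg0nn x hx) y
        rw [← ENNReal.ofReal_mul hGnn, ← ENNReal.ofReal_sub _
          (by positivity : (0:ℝ) ≤ Set.indicator (Set.Ici (0:ℝ)) g0 y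
            * Real.exp (-(a / γs * y)))]
        congr 1
        ring
      simp_rw [hsplit]
      rw [lintegral_sub (g := fun y => ENNReal.ofReal (Set.indicator (Set.Ici (0:ℝ)) g0 y
          * Real.exp (-(a / γs * y)))) ((hg0m.indicator measurableSet_Ici).mul (by fun_prop)
          |>.ennreal_ofReal) (by rw [hF2val]; exact ENNReal.ofReal_ne_top) ?hle]
      · rw [hF1val, hF2val]
      case hle =>
        refine Filter.Eventually.of_forall fun y => ?_
        apply ENNReal.ofReal_le_ofReal
        by_cases h : y ∈ Set.Ici (0:ℝ)
        · have hGnn : 0 ≤ Set.indicator (Set.Ici (0:ℝ)) g0 y :=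
            Set.indicator_nonneg (fun x hx => hg0nn x hx) y
          have he : Real.exp (-(a / γs * y)) ≤ 1 := by
            rw [Real.exp_le_one_iff]
            have : (0:ℝ) ≤ y := h
            have : (0:ℝ) ≤ a / γs * y := by positivity
            linarith
          exact mul_le_of_le_one_right hGnn he
        · rw [Set.indicator_of_notMem h, zero_mul]
    -- compute the RHS
    have hrw : (fun z : ℝ => ((1 + K) * γbar / γs)
          * Real.exp (-K + K * (1 + K) / ((1 + K) + (γbar / γs) * z))
          * (((1 + K) ^ 2 + z * γbar / γs) / ((1 + K) + z * γbar / γs) ^ 3))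
        = (fun z : ℝ => (γbar / γs) * (1 + K)
          * Real.exp (-K + K * (1 + K) / ((1 + K) + (γbar / γs) * z))
          * (((1 + K) ^ 2 + (γbar / γs) * z) / ((1 + K) + (γbar / γs) * z) ^ 3)) := by
      funext z
      rw [show (1 + K) * γbar / γs = (γbar / γs) * (1 + K) by ring,
        show z * γbar / γs = (γbar / γs) * z by ring]
    have hRHS : (volume.withDensity
        (fun z => ENNReal.ofReal
          (Set.indicator (Set.Ici (0 : ℝ))
            (fun z => ((1 + K) * γbar / γs)
              * Real.exp (-K + K * (1 + K) / ((1 + K) + (γbar / γs) * z))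
              * (((1 + K) ^ 2 + z * γbar / γs) / ((1 + K) + z * γbar / γs) ^ 3)) z)))
        (Set.Iic a)
        = ENNReal.ofReal (1 - ((1 + K) / ((1 + K) + (γbar / γs) * a))
            * Real.exp (-K + K * (1 + K) / ((1 + K) + (γbar / γs) * a))) := by
      rw [withDensity_apply _ measurableSet_Iic, hrw]
      exact rhs_Iic (γbar / γs) K hc hK ha
    rw [hLHS, hRHS]
    have hu : γbar * (a / γs + (1 + K) / γbar) = (1 + K) + (γbar / γs) * a := by
      field_simp
      ring
    rw [hT_def, hu, ENNReal.ofReal_sub _ (by positivity), ENNReal.ofReal_one]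
end

section
/- For x > 0, -Ei(-x) - (log(1/x) - γ) → 0 as x → 0⁺, where γ is the Euler–Mascheroni constant; consequently the capacity C = -Ei(-x) with x = λ log(2)(γ̄_p γ̄_ps + 1) γ̄_sp/γ̄_s satisfies C / log 2 → log₂(1/x) - γ/log 2 as γ̄_s → ∞, i.e., the fading capacity equals the AWGN capacity minus the constant γ (in nats). -/
open Filter Real

/-- The exponential integral `Ei(x) = -∫_{-x}^∞ e^{-t}/t dt` (for `x < 0`). -/
noncomputable def Ei (x : ℝ) : ℝ := -∫ t in Set.Ioi (-x), Real.exp (-t) / t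

namespace EiAux

open Set MeasureTheory
open scoped Topology

lemma hmeas : Measurable (fun t : ℝ => Real.log t * Real.exp (-t)) :=
  Real.measurable_log.mul (Real.continuous_exp.comp continuous_neg).measurable

lemma hInt : IntegrableOn (fun t : ℝ => Real.log t * Real.exp (-t)) (Ioi 0) := by
  rw [← Ioc_union_Ioi_eq_Ioi (zero_le_one' ℝ)]
  apply IntegrableOn.union
  · have hb : IntegrableOn (fun t : ℝ => 2 * t ^ (-(1/2) : ℝ)) (Ioc 0 1) := by
      have := (intervalIntegral.intervalIntegrable_rpow' (a := 0) (b := 1)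
        (r := -(1/2)) (by norm_num))
      rw [intervalIntegrable_iff_integrableOn_Ioc_of_le zero_le_one] at this
      exact this.const_mul 2
    refine (hb.mono' (hmeas.aestronglyMeasurable) ?_)
    refine (ae_restrict_iff' measurableSet_Ioc).2 (.of_forall fun t ht => ?_)
    have ht0 : 0 < t := ht.1
    have hlog : -Real.log t ≤ 2 * t ^ (-(1/2) : ℝ) := by
      have h1 : Real.log (t ^ (-(1/2) : ℝ)) ≤ t ^ (-(1/2) : ℝ) - 1 :=
        Real.log_le_sub_one_of_pos (Real.rpow_pos_of_pos ht0 _)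
      rw [Real.log_rpow ht0] at h1
      nlinarith [Real.rpow_pos_of_pos ht0 (-(1/2) : ℝ)]
    have hexp : Real.exp (-t) ≤ 1 := Real.exp_le_one_iff.2 (by linarith)
    have hlt : Real.log t ≤ 0 := Real.log_nonpos ht0.le ht.2
    rw [Real.norm_eq_abs, abs_mul, abs_of_nonpos hlt, abs_of_pos (Real.exp_pos _)]
    nlinarith [Real.exp_pos (-t)]
  · have hb : IntegrableOn (fun t : ℝ => Real.exp (-t) * t ^ ((2:ℝ) - 1)) (Ioi 1) :=
      (Real.GammaIntegral_convergent (by norm_num : (0:ℝ) < 2)).mono_set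
        (Ioi_subset_Ioi zero_le_one)
    refine hb.mono' hmeas.aestronglyMeasurable ?_
    refine (ae_restrict_iff' measurableSet_Ioi).2 (.of_forall fun t ht => ?_)
    have ht1 : (1:ℝ) < t := ht
    have hlog : |Real.log t| ≤ t := by
      rw [abs_of_nonneg (Real.log_nonneg ht1.le)]
      linarith [Real.log_le_sub_one_of_pos (by linarith : (0:ℝ) < t)]
    rw [Real.norm_eq_abs, abs_mul, abs_of_pos (Real.exp_pos _)]
    rw [show (2:ℝ) - 1 = 1 by norm_num, Real.rpow_one]
    nlinarith [Real.exp_pos (-t)]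

lemma hJ0 : ∫ t in Ioi (0:ℝ), Real.log t * Real.exp (-t) = -Real.eulerMascheroniConstant := by
  have hd := Complex.hasDerivAt_GammaIntegral (s := 1) (by norm_num)
  have hsimp : (∫ t : ℝ in Ioi 0, (t:ℂ) ^ ((1:ℂ) - 1) * (Real.log t * Real.exp (-t)))
      = ((∫ t in Ioi (0:ℝ), Real.log t * Real.exp (-t) : ℝ) : ℂ) := by
    have h1 : (∫ t : ℝ in Ioi 0, (t:ℂ) ^ ((1:ℂ) - 1) * (Real.log t * Real.exp (-t)))
        = ∫ t in Ioi (0:ℝ), ((Real.log t * Real.exp (-t) : ℝ) : ℂ) := by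
      refine setIntegral_congr_fun measurableSet_Ioi fun t ht => ?_
      push_cast
      rw [sub_self, Complex.cpow_zero, one_mul]
    rw [h1]
    exact integral_ofReal
  rw [hsimp] at hd
  have hEv : Complex.Gamma =ᶠ[𝓝 (1:ℂ)] Complex.GammaIntegral := by
    have : {s : ℂ | 0 < s.re} ∈ 𝓝 (1 : ℂ) :=
      (isOpen_lt continuous_const Complex.continuous_re).mem_nhds (by norm_num)
    filter_upwards [this] with s hs
    exact Complex.Gamma_eq_integral hs
  have hd2 : HasDerivAt Complex.Gamma
      ((∫ t in Ioi (0:ℝ), Real.log t * Real.exp (-t) : ℝ) : ℂ) 1 :=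
    hd.congr_of_eventuallyEq hEv
  have hd3 : HasDerivAt Real.Gamma (∫ t in Ioi (0:ℝ), Real.log t * Real.exp (-t)) 1 := by
    have := (by exact_mod_cast hd2 : HasDerivAt Complex.Gamma _ ((1:ℝ):ℂ)).real_of_complex
    simp only [Complex.ofReal_re] at this
    refine this.congr_of_eventuallyEq (.of_forall fun x => ?_)
    show Real.Gamma x = (Complex.Gamma ↑x).re
    rw [Complex.Gamma_ofReal, Complex.ofReal_re]
  exact hd3.unique Real.hasDerivAt_Gamma_one

lemma hEiInt {x : ℝ} (hx : 0 < x) :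
    IntegrableOn (fun t : ℝ => Real.exp (-t) / t) (Ioi x) := by
  have hb0 : IntegrableOn (fun t : ℝ => x⁻¹ * Real.exp (-1 * t)) (Ioi x) :=
    (exp_neg_integrableOn_Ioi x (by norm_num : (0:ℝ) < 1)).const_mul x⁻¹
  have hb : IntegrableOn (fun t : ℝ => x⁻¹ * Real.exp (-t)) (Ioi x) :=
    hb0.congr_fun (fun t _ => by simp) measurableSet_Ioi
  refine hb.mono' ?_ ?_
  · exact ((Real.continuous_exp.comp continuous_neg).measurable.div
      measurable_id).aestronglyMeasurable
  · refine (ae_restrict_iff' measurableSet_Ioi).2 (.of_forall fun t ht => ?_)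
    have htx : x < t := ht
    have ht0 : 0 < t := hx.trans htx
    rw [Real.norm_eq_abs, abs_of_pos (by positivity)]
    rw [div_eq_mul_inv, mul_comm (x⁻¹)]
    exact mul_le_mul_of_nonneg_left (inv_anti₀ hx htx.le) (Real.exp_pos _).le

lemma hIBP {x : ℝ} (hx : 0 < x) :
    ∫ t in Ioi x, Real.exp (-t) / t
      = (∫ t in Ioi x, Real.log t * Real.exp (-t)) - Real.exp (-x) * Real.log x := by
  have h_zero : Tendsto (fun t : ℝ => Real.log t * -Real.exp (-t)) (𝓝[>] x)
      (𝓝 (Real.log x * -Real.exp (-x))) :=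
    (((Real.continuousAt_log hx.ne').mul
      ((Real.continuous_exp.comp continuous_neg).continuousAt.neg)).tendsto).mono_left
      nhdsWithin_le_nhds
  have h_infty : Tendsto (fun t : ℝ => Real.log t * -Real.exp (-t)) atTop (𝓝 0) := by
    have h1 : Tendsto (fun t : ℝ => t * Real.exp (-t)) atTop (𝓝 0) := by
      simpa using Real.tendsto_pow_mul_exp_neg_atTop_nhds_zero 1
    have h1' := h1.neg
    rw [neg_zero] at h1'
    refine tendsto_of_tendsto_of_tendsto_of_le_of_le' h1' tendsto_const_nhds ?_ ?_
    · filter_upwards [eventually_ge_atTop (1:ℝ)] with t ht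
      have hlt : Real.log t ≤ t := by
        linarith [Real.log_le_sub_one_of_pos (by linarith : (0:ℝ) < t)]
      have h2 := Real.exp_pos (-t)
      have h3 := Real.log_nonneg ht
      show -(t * Real.exp (-t)) ≤ Real.log t * -Real.exp (-t)
      nlinarith
    · filter_upwards [eventually_ge_atTop (1:ℝ)] with t ht
      have h2 := Real.exp_pos (-t)
      have h3 := Real.log_nonneg ht
      show Real.log t * -Real.exp (-t) ≤ 0
      nlinarith
  have huv' : IntegrableOn (Real.log * fun t => Real.exp (-t)) (Ioi x) := by
    have := hInt.mono_set (Ioi_subset_Ioi hx.le)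
    exact this.congr_fun (fun t _ => rfl) measurableSet_Ioi
  have hu'v : IntegrableOn ((fun t : ℝ => t⁻¹) * fun t => -Real.exp (-t)) (Ioi x) := by
    have hneg : IntegrableOn (fun t : ℝ => -(Real.exp (-t) / t)) (Ioi x) := (hEiInt hx).neg
    refine hneg.congr_fun (fun t ht => ?_) measurableSet_Ioi
    show -(Real.exp (-t) / t) = t⁻¹ * -Real.exp (-t)
    ring
  have key := integral_Ioi_mul_deriv_eq_deriv_mul (a := x)
    (u := Real.log) (u' := fun t : ℝ => t⁻¹)
    (v := fun t => -Real.exp (-t)) (v' := fun t => Real.exp (-t))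
    (fun t ht => Real.hasDerivAt_log (hx.trans ht).ne')
    (fun t _ => by
      have h : HasDerivAt (fun t => -Real.exp (-t)) (-(Real.exp (-t) * -1)) t :=
        (hasDerivAt_neg t).exp.neg
      simpa using h)
    huv' hu'v h_zero h_infty
  have h2 : ∫ t in Ioi x, (t:ℝ)⁻¹ * -Real.exp (-t) = -∫ t in Ioi x, Real.exp (-t) / t := by
    rw [← integral_neg]
    exact setIntegral_congr_fun measurableSet_Ioi fun t _ => by ring
  rw [h2] at key
  have h3 : ∫ t in Ioi x, Real.log t * Real.exp (-t)
      = 0 - Real.log x * -Real.exp (-x) - -∫ t in Ioi x, Real.exp (-t) / t := key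
  linarith

lemma hIoc : Tendsto (fun x : ℝ => ∫ t in Ioc 0 x, Real.log t * Real.exp (-t))
    (𝓝[>] (0:ℝ)) (𝓝 0) := by
  set h : ℝ → ℝ := fun t => Real.log t * Real.exp (-t) with hh
  have hb : Integrable (fun t => ‖(Ioc (0:ℝ) 1).indicator h t‖) := by
    have : Integrable ((Ioc (0:ℝ) 1).indicator h) := by
      rw [integrable_indicator_iff measurableSet_Ioc]
      exact hInt.mono_set Ioc_subset_Ioi_self
    exact this.norm
  have key : Tendsto (fun x : ℝ => ∫ t, (Ioc (0:ℝ) x).indicator h t) (𝓝[>] (0:ℝ))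
      (𝓝 (∫ _t : ℝ, (0:ℝ))) := by
    refine tendsto_integral_filter_of_dominated_convergence
      (fun t => ‖(Ioc (0:ℝ) 1).indicator h t‖) ?_ ?_ hb ?_
    · exact .of_forall fun x => (hmeas.indicator measurableSet_Ioc).aestronglyMeasurable
    · filter_upwards [Ioc_mem_nhdsGT_of_mem (by norm_num : (0:ℝ) ∈ Ico (0:ℝ) 1)] with x hx
      refine .of_forall fun t => ?_
      exact norm_indicator_le_of_subset (Ioc_subset_Ioc_right hx.2) h t
    · refine .of_forall fun t => ?_
      by_cases ht : 0 < t
      · have hev : ∀ᶠ x in 𝓝[>] (0:ℝ), (Ioc (0:ℝ) x).indicator h t = 0 := by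
          filter_upwards [eventually_nhdsWithin_of_eventually_nhds (eventually_lt_nhds ht)]
            with x hx
          exact indicator_of_notMem (fun hmem => absurd hmem.2 (not_le.2 hx)) h
        exact Tendsto.congr' (hev.mono fun x hx => hx.symm) tendsto_const_nhds
      · have : ∀ x : ℝ, (Ioc (0:ℝ) x).indicator h t = 0 := fun x =>
          indicator_of_notMem (fun hmem => ht hmem.1) h
        simp only [this]
        exact tendsto_const_nhds
  simp only [integral_zero] at key
  refine key.congr fun x => ?_
  exact integral_indicator measurableSet_Ioc

lemma part1 : Tendsto (fun x : ℝ => -Ei (-x) - (Real.log (1 / x) - Real.eulerMascheroniConstant))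
    (𝓝[>] (0:ℝ)) (𝓝 0) := by
  have hJx : Tendsto (fun x : ℝ =>
      (∫ t in Ioi x, Real.log t * Real.exp (-t)) - (∫ t in Ioi (0:ℝ), Real.log t * Real.exp (-t)))
      (𝓝[>] (0:ℝ)) (𝓝 0) := by
    have := hIoc.neg
    rw [neg_zero] at this
    refine this.congr' ?_
    filter_upwards [self_mem_nhdsWithin] with x (hx : 0 < x)
    have hsplit : (∫ t in Ioi (0:ℝ), Real.log t * Real.exp (-t))
        = (∫ t in Ioc (0:ℝ) x, Real.log t * Real.exp (-t))
          + ∫ t in Ioi x, Real.log t * Real.exp (-t) := by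
      rw [← setIntegral_union (Ioc_disjoint_Ioi le_rfl) measurableSet_Ioi
        (hInt.mono_set Ioc_subset_Ioi_self) (hInt.mono_set (Ioi_subset_Ioi hx.le)),
        Ioc_union_Ioi_eq_Ioi hx.le]
    rw [hsplit]
    ring
  have hxl : Tendsto (fun x : ℝ => x * Real.log x) (𝓝[>] (0:ℝ)) (𝓝 0) := by
    have := tendsto_log_mul_rpow_nhdsGT_zero zero_lt_one
    refine this.congr fun x => ?_
    rw [Real.rpow_one, mul_comm]
  have hxlog : Tendsto (fun x : ℝ => (1 - Real.exp (-x)) * Real.log x) (𝓝[>] (0:ℝ)) (𝓝 0) := by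
    refine tendsto_of_tendsto_of_tendsto_of_le_of_le' hxl tendsto_const_nhds ?_ ?_
    · filter_upwards [Ioc_mem_nhdsGT_of_mem (by norm_num : (0:ℝ) ∈ Ico (0:ℝ) 1)] with x hx
      have hx0 : 0 < x := hx.1
      have h1 : 1 - Real.exp (-x) ≤ x := by linarith [Real.add_one_le_exp (-x)]
      have h2 : Real.log x ≤ 0 := Real.log_nonpos hx0.le hx.2
      exact mul_le_mul_of_nonpos_right h1 h2
    · filter_upwards [Ioc_mem_nhdsGT_of_mem (by norm_num : (0:ℝ) ∈ Ico (0:ℝ) 1)] with x hx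
      have hx0 : 0 < x := hx.1
      have h1 : 0 ≤ 1 - Real.exp (-x) := by
        have := Real.exp_le_one_iff.2 (by linarith : -x ≤ 0)
        linarith
      have h2 : Real.log x ≤ 0 := Real.log_nonpos hx0.le hx.2
      nlinarith
  have hsum := hJx.add hxlog
  rw [add_zero] at hsum
  refine hsum.congr' ?_
  filter_upwards [self_mem_nhdsWithin] with x (hx : 0 < x)
  have hEi : -Ei (-x) = ∫ t in Ioi x, Real.exp (-t) / t := by
    rw [Ei, neg_neg, neg_neg]
  rw [hEi, hIBP hx, hJ0, one_div, Real.log_inv]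
  ring

end EiAux

/-- `-Ei(-x) - (log(1/x) - γ) → 0` as `x → 0⁺`, where `γ` is the Euler–Mascheroni constant;
consequently with `x = λ log 2 (γ̄_p γ̄_ps + 1) γ̄_sp / γ̄_s`, as `γ̄_s → ∞` the capacity
`C/log 2 = (-Ei(-x))/log 2` approaches `log₂(1/x) - γ/log 2`. -/
theorem Ei_near_zero_and_high_snr_capacity
    (lam γp γps γsp : ℝ) (hlam : 0 < lam) (hγp : 0 < γp) (hγps : 0 < γps) (hγsp : 0 < γsp) :
    Tendsto (fun x : ℝ => -Ei (-x) - (Real.log (1 / x) - Real.eulerMascheroniConstant))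
        (nhdsWithin 0 (Set.Ioi 0)) (nhds 0)
    ∧ Tendsto (fun γs : ℝ =>
          (-Ei (-(lam * Real.log 2 * (γp * γps + 1) * γsp / γs))) / Real.log 2
            - (Real.logb 2 (1 / (lam * Real.log 2 * (γp * γps + 1) * γsp / γs))
                - Real.eulerMascheroniConstant / Real.log 2))
        atTop (nhds 0) := by
  refine ⟨EiAux.part1, ?_⟩
  have hc : 0 < lam * Real.log 2 * (γp * γps + 1) * γsp := by
    have := Real.log_pos one_lt_two
    positivity
  have hx : Tendsto (fun γs : ℝ => lam * Real.log 2 * (γp * γps + 1) * γsp / γs) atTop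
      (nhdsWithin 0 (Set.Ioi 0)) := by
    rw [tendsto_nhdsWithin_iff]
    constructor
    · exact tendsto_const_nhds.div_atTop tendsto_id
    · filter_upwards [eventually_gt_atTop (0:ℝ)] with γs hγs
      exact Set.mem_Ioi.2 (div_pos hc hγs)
  have hcomp := EiAux.part1.comp hx
  have hdiv := hcomp.div_const (Real.log 2)
  rw [zero_div] at hdiv
  refine hdiv.congr fun γs => ?_
  simp only [Function.comp_apply, Real.logb, Real.log_div]
  ring
end

section
/- In the N-user underlay cognitive parallel access channel, the combined multiuser diversity gain satisfies γ̄_PAC(N) ≥ γ̄_o(N), where γ̄_PAC(N) = E[max_n γ_{s,n} Q_p/(γ_{sp,n}(1+γ̄_p γ_{ps,n}))]/E[γ_{s,n} Q_p/(γ_{sp,n}(1+γ̄_p γ_{ps,n}))] and γ̄_o(N) = E[max_n γ_{s,n}]/E[γ_{s,n}]. This follows because: (a) selecting the user n' maximizing γ_{s,n} is suboptimal for the SINR objective; (b) γ_{s,n} is independent of (γ_{sp,n}, γ_{ps,n}); and (c) the interference terms for user n' and a generic user n are identically distributed. -/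
open MeasureTheory ProbabilityTheory

/-- In the `N`-user underlay cognitive parallel access channel, the combined multiuser
diversity gain of max-SINR scheduling is at least the multiuser diversity gain of the
reference network: `γ̄_PAC(N) ≥ γ̄_o(N)`. -/
theorem pac_gain_ge_reference_gain
    {Ω : Type*} [MeasureSpace Ω] (P : Measure Ω) [IsProbabilityMeasure P]
    (N : ℕ) (hN : 0 < N)
    (Qp γp : ℝ) (hQp : 0 < Qp) (hγp : 0 < γp)
    (γs γsp γps : Fin N → Ω → ℝ)
    (hmeas_s : ∀ n, Measurable (γs n)) (hmeas_sp : ∀ n, Measurable (γsp n))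
    (hmeas_ps : ∀ n, Measurable (γps n))
    (hpos_s : ∀ n, ∀ᵐ ω ∂P, 0 < γs n ω) (hpos_sp : ∀ n, ∀ᵐ ω ∂P, 0 < γsp n ω)
    (hpos_ps : ∀ n, ∀ᵐ ω ∂P, 0 < γps n ω)
    -- the per-user triples are i.i.d. across users
    (hiid : ∀ n : Fin N,
      Measure.map (fun ω => (γs n ω, γsp n ω, γps n ω)) P
        = Measure.map (fun ω => (γs ⟨0, hN⟩ ω, γsp ⟨0, hN⟩ ω, γps ⟨0, hN⟩ ω)) P)
    (hindep_users : iIndepFun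
      (fun n ω => (γs n ω, γsp n ω, γps n ω)) P)
    -- the SU-to-SU channels are independent of the interference channels
    (hindep_si : IndepFun (fun ω (n : Fin N) => γs n ω)
      (fun ω (n : Fin N) => (γsp n ω, γps n ω)) P)
    -- integrability of all relevant quantities
    (hint_max_sinr : Integrable (fun ω => Finset.univ.sup'
        (Finset.univ_nonempty_iff.mpr ⟨⟨0, hN⟩⟩)
        (fun n => γs n ω * Qp / (γsp n ω * (1 + γp * γps n ω)))) P)
    (hint_sinr : ∀ n, Integrable (fun ω => γs n ω * Qp / (γsp n ω * (1 + γp * γps n ω))) P)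
    (hint_max_s : Integrable (fun ω => Finset.univ.sup'
        (Finset.univ_nonempty_iff.mpr ⟨⟨0, hN⟩⟩) (fun n => γs n ω)) P)
    (hint_s : ∀ n, Integrable (γs n) P) :
    (∫ ω, Finset.univ.sup' (Finset.univ_nonempty_iff.mpr ⟨⟨0, hN⟩⟩)
        (fun n => γs n ω * Qp / (γsp n ω * (1 + γp * γps n ω))) ∂P)
      / (∫ ω, γs ⟨0, hN⟩ ω * Qp / (γsp ⟨0, hN⟩ ω * (1 + γp * γps ⟨0, hN⟩ ω)) ∂P)
    ≥ (∫ ω, Finset.univ.sup' (Finset.univ_nonempty_iff.mpr ⟨⟨0, hN⟩⟩)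
        (fun n => γs n ω) ∂P) / (∫ ω, γs ⟨0, hN⟩ ω ∂P) := by
  classical
  set n0 : Fin N := ⟨0, hN⟩ with hn0
  have hne : (Finset.univ : Finset (Fin N)).Nonempty := Finset.univ_nonempty_iff.mpr ⟨n0⟩
  -- notation
  set M : Ω → ℝ := fun ω => Finset.univ.sup' hne (fun n => γs n ω) with hMdef
  set S : Ω → ℝ := fun ω =>
    Finset.univ.sup' hne (fun n => γs n ω * Qp / (γsp n ω * (1 + γp * γps n ω))) with hSdef
  set J : Fin N → Ω → ℝ := fun n ω => Qp / (γsp n ω * (1 + γp * γps n ω)) with hJdef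
  -- measurability basics
  have hmJ : ∀ n, Measurable (J n) := by
    intro n
    exact measurable_const.div
      ((hmeas_sp n).mul (measurable_const.add (measurable_const.mul (hmeas_ps n))))
  have hmM : Measurable M := by
    have h := Finset.measurable_sup' hne (fun n (_ : n ∈ Finset.univ) => hmeas_s n)
    convert h using 1
    ext ω
    exact (Finset.sup'_apply hne γs ω).symm
  -- a.e. positivity, all at once
  have hpos : ∀ᵐ ω ∂P, ∀ n, 0 < γs n ω ∧ 0 < γsp n ω ∧ 0 < γps n ω := by
    rw [ae_all_iff]
    intro n
    filter_upwards [hpos_s n, hpos_sp n, hpos_ps n] with ω h1 h2 h3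
    exact ⟨h1, h2, h3⟩
  have hJpos : ∀ ω, (∀ n, 0 < γs n ω ∧ 0 < γsp n ω ∧ 0 < γps n ω) → ∀ n, 0 < J n ω := by
    intro ω hω n
    have h := hω n
    exact div_pos hQp (mul_pos h.2.1 (by nlinarith [h.2.2]))
  have hMposae : ∀ ω, (∀ n, 0 < γs n ω ∧ 0 < γsp n ω ∧ 0 < γps n ω) → 0 < M ω := by
    intro ω hω
    exact lt_of_lt_of_le (hω n0).1 (Finset.le_sup' (fun n => γs n ω) (Finset.mem_univ n0))
  -- the vector-valued maps
  set X : Ω → (Fin N → ℝ) := fun ω n => γs n ω with hXdef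
  set Y : Ω → (Fin N → ℝ × ℝ) := fun ω n => (γsp n ω, γps n ω) with hYdef
  have hmX : Measurable X := measurable_pi_lambda _ (fun n => hmeas_s n)
  -- the sup function on vectors
  set g : (Fin N → ℝ) → ℝ := fun v => Finset.univ.sup' hne (fun n => v n) with hgdef
  have hmg : Measurable g := by
    have h := Finset.measurable_sup' hne
      (fun (n : Fin N) (_ : n ∈ Finset.univ) => measurable_pi_apply (a := n) (X := fun _ : Fin N => ℝ))
    convert h using 1
    ext v
    exact (Finset.sup'_apply hne (fun n (v : Fin N → ℝ) => v n) v).symm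
  -- the selection sets
  set B : Fin N → Set (Fin N → ℝ) := fun n =>
    {v | v n = g v ∧ ∀ m, m < n → v m ≠ g v} with hBdef
  have hBmeas : ∀ n, MeasurableSet (B n) := by
    intro n
    have h1 : MeasurableSet {v : Fin N → ℝ | v n = g v} :=
      measurableSet_eq_fun (measurable_pi_apply n) hmg
    have h2 : ∀ m : Fin N, MeasurableSet {v : Fin N → ℝ | v m ≠ g v} :=
      fun m => (measurableSet_eq_fun (measurable_pi_apply m) hmg).compl
    have : B n = {v : Fin N → ℝ | v n = g v} ∩ ⋂ m, ⋂ (_ : m < n), {v | v m ≠ g v} := by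
      ext v
      simp [hBdef, Set.mem_iInter]
    rw [this]
    exact h1.inter (MeasurableSet.iInter fun m => MeasurableSet.iInter fun _ => h2 m)
  set A : Fin N → Set Ω := fun n => X ⁻¹' (B n) with hAdef
  have hAmeas : ∀ n, MeasurableSet (A n) := fun n => hmX (hBmeas n)
  have hgX : ∀ ω, g (X ω) = M ω := fun ω => rfl
  -- every ω lies in exactly one A n
  have hexists : ∀ ω, ∃ n, ω ∈ A n ∧ ∀ m, m ≠ n → ω ∉ A m := by
    intro ω
    have hTne : (Finset.univ.filter (fun n => γs n ω = M ω)).Nonempty := by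
      obtain ⟨i, hi, hieq⟩ := Finset.exists_mem_eq_sup' hne (fun n => γs n ω)
      exact ⟨i, Finset.mem_filter.mpr ⟨hi, hieq.symm⟩⟩
    set T := Finset.univ.filter (fun n => γs n ω = M ω)
    refine ⟨T.min' hTne, ?_, ?_⟩
    · constructor
      · exact (Finset.mem_filter.mp (T.min'_mem hTne)).2
      · intro m hm hmeq
        have : m ∈ T := Finset.mem_filter.mpr ⟨Finset.mem_univ m, hmeq⟩
        exact absurd (T.min'_le m this) (not_le.mpr hm)
    · intro m hmne hmem
      rcases lt_or_gt_of_ne hmne with h | h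
      · have : m ∈ T := Finset.mem_filter.mpr ⟨Finset.mem_univ m, hmem.1⟩
        exact absurd (T.min'_le m this) (not_le.mpr h)
      · exact hmem.2 _ h (Finset.mem_filter.mp (T.min'_mem hTne)).2
  -- sum of indicators is one
  set ind : Fin N → Ω → ℝ := fun n => Set.indicator (A n) (fun _ => (1 : ℝ)) with hinddef
  have hind01 : ∀ n ω, ind n ω = 0 ∨ ind n ω = 1 := by
    intro n ω
    by_cases h : ω ∈ A n
    · right; simp [hinddef, h]
    · left; simp [hinddef, h]
  have hindnonneg : ∀ n ω, 0 ≤ ind n ω := by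
    intro n ω; rcases hind01 n ω with h | h <;> simp [h]
  have hsum1 : ∀ ω, (∑ n : Fin N, ind n ω) = 1 := by
    intro ω
    obtain ⟨n, hn, hother⟩ := hexists ω
    rw [Finset.sum_eq_single n]
    · simp [hinddef, hn]
    · intro m _ hm
      simp [hinddef, hother m hm]
    · intro h; exact absurd (Finset.mem_univ n) h
  -- the summands
  set f : Fin N → Ω → ℝ := fun n ω => ind n ω * M ω * J n ω with hfdef
  have hmf : ∀ n, Measurable (f n) := by
    intro n
    exact (((measurable_const.indicator (hAmeas n)).mul hmM).mul (hmJ n))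
  have hfnonneg : ∀ᵐ ω ∂P, ∀ n, 0 ≤ f n ω := by
    filter_upwards [hpos] with ω hω n
    exact mul_nonneg (mul_nonneg (hindnonneg n ω) (hMposae ω hω).le) (hJpos ω hω n).le
  -- the key pointwise bound : ∑ n, f n ω ≤ S ω
  have hsumle : ∀ᵐ ω ∂P, (∑ n : Fin N, f n ω) ≤ S ω := by
    filter_upwards [hpos] with ω hω
    obtain ⟨n, hn, hother⟩ := hexists ω
    have hsum : (∑ m : Fin N, f m ω) = M ω * J n ω := by
      rw [Finset.sum_eq_single n]
      · simp [hfdef, hinddef, hn]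
      · intro m _ hm
        simp [hfdef, hinddef, hother m hm]
      · intro h; exact absurd (Finset.mem_univ n) h
    have hMn : M ω = γs n ω := (hn.1).symm
    rw [hsum, hMn]
    have : γs n ω * J n ω = γs n ω * Qp / (γsp n ω * (1 + γp * γps n ω)) := by
      rw [hJdef, mul_div_assoc]
    rw [this]
    exact Finset.le_sup' (fun m => γs m ω * Qp / (γsp m ω * (1 + γp * γps m ω)))
      (Finset.mem_univ n)
  -- integrability of each f n
  have hfint : ∀ n, Integrable (f n) P := by
    intro n
    refine Integrable.mono' hint_max_sinr ((hmf n).aestronglyMeasurable) ?_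
    filter_upwards [hpos, hsumle] with ω hω hle
    have h1 : f n ω ≤ ∑ m : Fin N, f m ω := by
      refine Finset.single_le_sum (f := fun m => f m ω) ?_ (Finset.mem_univ n)
      intro m _
      exact mul_nonneg (mul_nonneg (hindnonneg m ω) (hMposae ω hω).le) (hJpos ω hω m).le
    have h0 : 0 ≤ f n ω :=
      mul_nonneg (mul_nonneg (hindnonneg n ω) (hMposae ω hω).le) (hJpos ω hω n).le
    rw [Real.norm_eq_abs, abs_of_nonneg h0]
    exact le_trans h1 hle
  -- integrability of ind n * M
  have hindMint : ∀ n, Integrable (fun ω => ind n ω * M ω) P := by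
    intro n
    refine Integrable.mono' hint_max_s
      (((measurable_const.indicator (hAmeas n)).mul hmM).aestronglyMeasurable) ?_
    filter_upwards [hpos] with ω hω
    rw [Real.norm_eq_abs, abs_of_nonneg (mul_nonneg (hindnonneg n ω) (hMposae ω hω).le)]
    rcases hind01 n ω with h | h <;> simp [h, (hMposae ω hω).le]
  -- all J n have the same expectation
  have hg3 : Measurable (fun p : ℝ × ℝ × ℝ => Qp / (p.2.1 * (1 + γp * p.2.2))) := by
    fun_prop
  have htriple : ∀ n, Measurable (fun ω => (γs n ω, γsp n ω, γps n ω)) := by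
    intro n
    exact (hmeas_s n).prod ((hmeas_sp n).prod (hmeas_ps n))
  have hEJ : ∀ n, (∫ ω, J n ω ∂P) = ∫ ω, J n0 ω ∂P := by
    intro n
    have h1 : ∀ m : Fin N, (∫ ω, J m ω ∂P)
        = ∫ p, Qp / (p.2.1 * (1 + γp * p.2.2)) ∂(Measure.map (fun ω => (γs m ω, γsp m ω, γps m ω)) P) := by
      intro m
      rw [integral_map (htriple m).aemeasurable hg3.aestronglyMeasurable]
    rw [h1 n, h1 n0, hiid n]
  -- independence of ind n * M and J n, and the product rule
  have hprod : ∀ n, (∫ ω, f n ω ∂P) = (∫ ω, ind n ω * M ω ∂P) * (∫ ω, J n ω ∂P) := by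
    intro n
    set φ : (Fin N → ℝ) → ℝ := fun v => Set.indicator (B n) (fun _ => (1 : ℝ)) v * g v with hφdef
    set ψ : (Fin N → ℝ × ℝ) → ℝ := fun w => Qp / ((w n).1 * (1 + γp * (w n).2)) with hψdef
    have hmφ : Measurable φ := (measurable_const.indicator (hBmeas n)).mul hmg
    have hmψ : Measurable ψ := by fun_prop
    have hindep : IndepFun (fun ω => φ (X ω)) (fun ω => ψ (Y ω)) P :=
      hindep_si.comp hmφ hmψ
    have hφX : ∀ ω, φ (X ω) = ind n ω * M ω := by
      intro ω
      by_cases h : X ω ∈ B n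
      · simp only [hφdef, hinddef, hAdef, Set.indicator_of_mem h,
          Set.indicator_of_mem (show ω ∈ X ⁻¹' B n from h), hgX ω]
      · simp only [hφdef, hinddef, hAdef, Set.indicator_of_notMem h,
          Set.indicator_of_notMem (show ω ∉ X ⁻¹' B n from h), zero_mul]
    have hψY : ∀ ω, ψ (Y ω) = J n ω := fun ω => rfl
    have := IndepFun.integral_mul_eq_mul_integral hindep
      ((hmφ.comp hmX).aestronglyMeasurable)
      ((hmψ.comp (measurable_pi_lambda _ (fun m => (hmeas_sp m).prod (hmeas_ps m)))).aestronglyMeasurable)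
    calc (∫ ω, f n ω ∂P) = ∫ ω, ((fun ω => φ (X ω)) * fun ω => ψ (Y ω)) ω ∂P := by
          refine integral_congr_ae (Filter.Eventually.of_forall fun ω => ?_)
          simp [hfdef, Pi.mul_apply, hφX ω, hψY ω, mul_assoc]
      _ = (∫ ω, φ (X ω) ∂P) * ∫ ω, ψ (Y ω) ∂P := this
      _ = (∫ ω, ind n ω * M ω ∂P) * ∫ ω, J n ω ∂P := by
          rw [integral_congr_ae (Filter.Eventually.of_forall fun ω => hφX ω),
            integral_congr_ae (Filter.Eventually.of_forall fun ω => hψY ω)]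
  -- independence of γs n0 and J n0
  have hE0 : (∫ ω, γs n0 ω * Qp / (γsp n0 ω * (1 + γp * γps n0 ω)) ∂P)
      = (∫ ω, γs n0 ω ∂P) * ∫ ω, J n0 ω ∂P := by
    set φ : (Fin N → ℝ) → ℝ := fun v => v n0 with hφdef
    set ψ : (Fin N → ℝ × ℝ) → ℝ := fun w => Qp / ((w n0).1 * (1 + γp * (w n0).2)) with hψdef
    have hmφ : Measurable φ := measurable_pi_apply n0
    have hmψ : Measurable ψ := by fun_prop
    have hindep : IndepFun (fun ω => φ (X ω)) (fun ω => ψ (Y ω)) P :=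
      hindep_si.comp hmφ hmψ
    have := IndepFun.integral_mul_eq_mul_integral hindep
      ((hmφ.comp hmX).aestronglyMeasurable)
      ((hmψ.comp (measurable_pi_lambda _ (fun m => (hmeas_sp m).prod (hmeas_ps m)))).aestronglyMeasurable)
    calc (∫ ω, γs n0 ω * Qp / (γsp n0 ω * (1 + γp * γps n0 ω)) ∂P)
        = ∫ ω, ((fun ω => φ (X ω)) * fun ω => ψ (Y ω)) ω ∂P := by
          refine integral_congr_ae (Filter.Eventually.of_forall fun ω => ?_)
          simp [Pi.mul_apply, hφdef, hψdef, hXdef, hYdef, mul_div_assoc]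
      _ = (∫ ω, φ (X ω) ∂P) * ∫ ω, ψ (Y ω) ∂P := this
      _ = (∫ ω, γs n0 ω ∂P) * ∫ ω, J n0 ω ∂P := rfl
  -- main inequality : ∫ S ≥ (∫ M) * (∫ J n0)
  have hsumint : Integrable (fun ω => ∑ n : Fin N, f n ω) P :=
    integrable_finset_sum _ (fun n _ => hfint n)
  have hmain : (∫ ω, M ω ∂P) * (∫ ω, J n0 ω ∂P) ≤ ∫ ω, S ω ∂P := by
    have h1 : (∫ ω, ∑ n : Fin N, f n ω ∂P) ≤ ∫ ω, S ω ∂P :=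
      integral_mono_ae hsumint hint_max_sinr hsumle
    have h2 : (∫ ω, ∑ n : Fin N, f n ω ∂P) = ∑ n : Fin N, ∫ ω, f n ω ∂P :=
      integral_finset_sum _ (fun n _ => hfint n)
    have h3 : (∑ n : Fin N, ∫ ω, f n ω ∂P)
        = (∑ n : Fin N, ∫ ω, ind n ω * M ω ∂P) * ∫ ω, J n0 ω ∂P := by
      rw [Finset.sum_mul]
      exact Finset.sum_congr rfl fun n _ => by rw [hprod n, hEJ n]
    have h4 : (∑ n : Fin N, ∫ ω, ind n ω * M ω ∂P) = ∫ ω, M ω ∂P := by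
      rw [← integral_finset_sum _ (fun n _ => hindMint n)]
      refine integral_congr_ae (Filter.Eventually.of_forall fun ω => ?_)
      show (∑ n : Fin N, ind n ω * M ω) = M ω
      rw [← Finset.sum_mul, hsum1 ω, one_mul]
    rw [← h4, ← h3, ← h2]
    exact h1
  -- positivity of integrals
  have posint : ∀ (u : Ω → ℝ), Integrable u P → (∀ᵐ ω ∂P, 0 < u ω) → 0 < ∫ ω, u ω ∂P := by
    intro u hu hupos
    have h0 : 0 ≤ᵐ[P] u := hupos.mono fun ω h => h.le
    refine (integral_pos_iff_support_of_nonneg_ae h0 hu).mpr ?_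
    rw [pos_iff_ne_zero]
    intro hz
    have hzero : ∀ᵐ ω ∂P, u ω = 0 := by
      rw [ae_iff]
      simpa [Function.support] using hz
    have := Filter.Eventually.exists (hupos.and hzero)
    obtain ⟨ω, h1, h2⟩ := this
    exact h1.ne' h2
  have hcs : 0 < ∫ ω, γs n0 ω ∂P := posint _ (hint_s n0) (hpos_s n0)
  have hd0 : 0 < ∫ ω, γs n0 ω * Qp / (γsp n0 ω * (1 + γp * γps n0 ω)) ∂P := by
    refine posint _ (hint_sinr n0) ?_
    filter_upwards [hpos] with ω hω
    have h := hω n0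
    exact div_pos (mul_pos h.1 hQp) (mul_pos h.2.1 (by nlinarith [h.2.2]))
  have hc : 0 < ∫ ω, J n0 ω ∂P := by
    nlinarith [hE0, hd0, hcs]
  have hMbar : 0 < ∫ ω, M ω ∂P := by
    refine lt_of_lt_of_le hcs (integral_mono (hint_s n0) ?_ ?_)
    · convert hint_max_s using 1
    · intro ω
      exact Finset.le_sup' (fun n => γs n ω) (Finset.mem_univ n0)
  -- conclusion
  show (∫ ω, S ω ∂P) / (∫ ω, γs n0 ω * Qp / (γsp n0 ω * (1 + γp * γps n0 ω)) ∂P)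
      ≥ (∫ ω, M ω ∂P) / (∫ ω, γs n0 ω ∂P)
  rw [ge_iff_le, hE0, div_le_div_iff₀ hcs (mul_pos hcs hc)]
  nlinarith [hmain, hc, hcs, hMbar]
end
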